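/- Let υ be a complex-valued Schwartz function on ℝ × ℝ and let μ be a finite Borel measure on ℝ × ℝ with compact support (there is a compact K with μ(Kᶜ) = 0). For t ∈ ℝ define F(t) : ℝ × ℝ → ℂ by F(t)(x) := ∫ υ(x - t • a) ∂μ(a), and H(t)(x) := - ∫ (fderiv ℝ υ (x - t • a)) a ∂μ(a). Then F(t) and H(t) are integrable for every t, and the curve t ↦ [F(t)] into L¹(ℝ × ℝ, ℂ) is differentiable at every t₀ ∈ ℝ (HasDerivAt in Lp ℂ 1 volume) with derivative [H(t₀)]. -/

import Mathlib

open MeasureTheory Filter Topology SchwartzMap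
open scoped ENNReal NNReal

section Helpers
variable {F : Type*} [NormedAddCommGroup F] [NormedSpace ℝ F]

/-- Decay bound for Schwartz functions on `ℝ × ℝ`. -/
lemma decay3 (f : SchwartzMap (ℝ × ℝ) F) :
    ∃ C : ℝ, 0 ≤ C ∧ ∀ x : ℝ × ℝ, ‖f x‖ ≤ C * ((1 + ‖x‖) ^ (3:ℕ))⁻¹ := by
  refine ⟨2 ^ 3 * (Finset.Iic ((3:ℕ),(0:ℕ))).sup (fun m => SchwartzMap.seminorm ℝ m.1 m.2) f,
    by positivity, fun x => ?_⟩
  have h := one_add_le_sup_seminorm_apply (𝕜 := ℝ) (m := ((3:ℕ),(0:ℕ))) (k := 3) (n := 0)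
    le_rfl le_rfl f x
  rw [norm_iteratedFDeriv_zero] at h
  have hp : (0:ℝ) < (1 + ‖x‖) ^ (3:ℕ) := by positivity
  rw [mul_comm, ← div_eq_inv_mul, le_div_iff₀ hp, mul_comm]
  exact h

lemma shift_bound {x v : ℝ × ℝ} (hv : ‖v‖ ≤ 1) :
    ((1 + ‖x - v‖) ^ (3:ℕ))⁻¹ ≤ 8 * ((1 + ‖x‖) ^ (3:ℕ))⁻¹ := by
  have h1 : ‖x‖ ≤ ‖x - v‖ + 1 := by
    have := norm_sub_le (x - v) (-v)
    simp only [sub_neg_eq_add, sub_add_cancel] at this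
    calc ‖x‖ ≤ ‖x - v‖ + ‖-v‖ := this
    _ ≤ ‖x - v‖ + 1 := by rw [norm_neg]; linarith
  have h2 : (1 + ‖x‖) ^ (3:ℕ) ≤ 8 * (1 + ‖x - v‖) ^ (3:ℕ) := by
    have h3 : 1 + ‖x‖ ≤ 2 * (1 + ‖x - v‖) := by linarith [norm_nonneg (x - v)]
    calc (1 + ‖x‖) ^ (3:ℕ) ≤ (2 * (1 + ‖x - v‖)) ^ (3:ℕ) := by
          apply pow_le_pow_left₀ (by positivity) h3
    _ = 8 * (1 + ‖x - v‖) ^ (3:ℕ) := by ring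
  have hx : (0:ℝ) < (1 + ‖x‖) ^ (3:ℕ) := by positivity
  have hxv : (0:ℝ) < (1 + ‖x - v‖) ^ (3:ℕ) := by positivity
  rw [inv_le_iff_one_le_mul₀' hxv]
  calc (1:ℝ) = ((1 + ‖x‖) ^ (3:ℕ)) * ((1 + ‖x‖) ^ (3:ℕ))⁻¹ := (mul_inv_cancel₀ hx.ne').symm
  _ ≤ (8 * (1 + ‖x - v‖) ^ (3:ℕ)) * ((1 + ‖x‖) ^ (3:ℕ))⁻¹ :=
      mul_le_mul_of_nonneg_right h2 (by positivity)
  _ = (1 + ‖x - v‖) ^ (3:ℕ) * (8 * ((1 + ‖x‖) ^ (3:ℕ))⁻¹) := by ring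

lemma integrable_inv_pow3 : Integrable (fun x : ℝ × ℝ => ((1 + ‖x‖) ^ (3:ℕ))⁻¹) volume := by
  have h := integrable_one_add_norm (E := ℝ × ℝ) (μ := volume) (r := 3)
    (by simp [Module.finrank_prod]; norm_num)
  refine h.congr (Eventually.of_forall fun x => ?_)
  show (1 + ‖x‖) ^ (-(3:ℝ)) = _
  rw [Real.rpow_neg (by positivity), show ((3:ℝ)) = ((3:ℕ):ℝ) by norm_num,
    Real.rpow_natCast]

end Helpers

section Schwartz
variable (υ : SchwartzMap (ℝ × ℝ) ℂ)

lemma contD : Continuous (fun y : ℝ × ℝ => fderiv ℝ (υ : ℝ × ℝ → ℂ) y) := by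
  have h := (SchwartzMap.fderivCLM ℝ (ℝ × ℝ) ℂ υ).continuous
  have he : ⇑(SchwartzMap.fderivCLM ℝ (ℝ × ℝ) ℂ υ) = fun y => fderiv ℝ (υ : ℝ × ℝ → ℂ) y :=
    funext fun y => SchwartzMap.fderivCLM_apply ℝ υ y
  rwa [he] at h

lemma decayD : ∃ C : ℝ, 0 ≤ C ∧ ∀ y : ℝ × ℝ,
    ‖fderiv ℝ (υ : ℝ × ℝ → ℂ) y‖ ≤ C * ((1 + ‖y‖) ^ (3:ℕ))⁻¹ := by
  obtain ⟨C, hC0, hC⟩ := decay3 (SchwartzMap.fderivCLM ℝ (ℝ × ℝ) ℂ υ)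
  exact ⟨C, hC0, fun y => by simpa [SchwartzMap.fderivCLM_apply] using hC y⟩

lemma intD : Integrable (fun y : ℝ × ℝ => ‖fderiv ℝ (υ : ℝ × ℝ → ℂ) y‖) volume := by
  have h := (SchwartzMap.fderivCLM ℝ (ℝ × ℝ) ℂ υ).integrable (μ := volume).norm
  simpa [SchwartzMap.fderivCLM_apply] using h

lemma key_ptwise (w y : ℝ × ℝ) :
    ‖υ (y - w) - υ y + (fderiv ℝ (υ : ℝ × ℝ → ℂ) y) w‖ ≤
      ‖w‖ * ∫ s in Set.Ioc (0:ℝ) 1, ‖fderiv ℝ (υ : ℝ × ℝ → ℂ) (y - s • w)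
        - fderiv ℝ (υ : ℝ × ℝ → ℂ) y‖ := by
  set D := fun y : ℝ × ℝ => fderiv ℝ (υ : ℝ × ℝ → ℂ) y with hD
  set g : ℝ → ℂ := fun s => υ (y - s • w) + s • ((D y) w) with hg
  have hgd : ∀ s : ℝ, HasDerivAt g ((D y) w - (D (y - s • w)) w) s := by
    intro s
    have h1 : HasDerivAt (fun s : ℝ => s • w) w s := by
      simpa using (hasDerivAt_id s).smul_const w
    have h2 : HasDerivAt (fun s : ℝ => y - s • w) (-w) s := h1.const_sub y
    have h3 : HasFDerivAt (υ : ℝ × ℝ → ℂ) (D (y - s • w)) (y - s • w) :=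
      (υ.differentiable.differentiableAt).hasFDerivAt
    have h4 : HasDerivAt (fun s : ℝ => υ (y - s • w)) ((D (y - s • w)) (-w)) s :=
      h3.comp_hasDerivAt s h2
    have h5 : HasDerivAt (fun s : ℝ => s • ((D y) w)) ((D y) w) s := by
      simpa using (hasDerivAt_id s).smul_const ((D y) w)
    have := h4.add h5
    rw [map_neg, neg_add_eq_sub] at this
    exact this
  have hcont : Continuous fun s : ℝ => (D y) w - (D (y - s • w)) w := by
    have hc : Continuous fun s : ℝ => y - s • w := by continuity
    exact continuous_const.sub (((contD υ).comp hc).clm_apply continuous_const)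
  have hFTC := intervalIntegral.integral_eq_sub_of_hasDerivAt
    (f := g) (f' := fun s => (D y) w - (D (y - s • w)) w)
    (fun s _ => hgd s) (hcont.intervalIntegrable 0 1)
  have hg1 : g 1 - g 0 = υ (y - w) - υ y + (D y) w := by
    simp [hg, one_smul, zero_smul, sub_zero]
    ring
  rw [hg1] at hFTC
  rw [← hFTC]
  calc ‖∫ s in (0:ℝ)..1, ((D y) w - (D (y - s • w)) w)‖
      ≤ ∫ s in (0:ℝ)..1, ‖(D y) w - (D (y - s • w)) w‖ :=
        intervalIntegral.norm_integral_le_integral_norm zero_le_one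
  _ ≤ ∫ s in (0:ℝ)..1, ‖D (y - s • w) - D y‖ * ‖w‖ := by
        apply intervalIntegral.integral_mono_on zero_le_one
        · exact (hcont.norm).intervalIntegrable 0 1
        · exact ((((contD υ).comp (by continuity)).sub continuous_const).norm.mul
            continuous_const).intervalIntegrable 0 1
        · intro s _
          have : (D y) w - (D (y - s • w)) w = ((D y) - (D (y - s • w))) w := by simp
          rw [this]
          calc ‖((D y) - (D (y - s • w))) w‖ ≤ ‖(D y) - (D (y - s • w))‖ * ‖w‖ :=
                ContinuousLinearMap.le_opNorm _ _
          _ = ‖D (y - s • w) - D y‖ * ‖w‖ := by rw [norm_sub_rev]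
  _ = ‖w‖ * ∫ s in Set.Ioc (0:ℝ) 1, ‖D (y - s • w) - D y‖ := by
        rw [intervalIntegral.integral_of_le zero_le_one, ← MeasureTheory.integral_const_mul]
        congr 1
        ext s
        ring

end Schwartz

section Phi
variable (υ : SchwartzMap (ℝ × ℝ) ℂ)

/-- The increment function. -/
noncomputable def Gfun (h : ℝ) (a : ℝ × ℝ) : ℝ × ℝ → ℂ :=
  fun y => υ (y - h • a) - υ y + h • ((fderiv ℝ (υ : ℝ × ℝ → ℂ) y) a)

/-- The L¹-error of the first-order Taylor expansion of the translate. -/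
noncomputable def phi (h : ℝ) (a : ℝ × ℝ) : ℝ := ∫ y, ‖Gfun υ h a y‖

lemma intDa (a : ℝ × ℝ) : Integrable (fun y : ℝ × ℝ =>
    (fderiv ℝ (υ : ℝ × ℝ → ℂ) y) a) volume := by
  have h := ((ContinuousLinearMap.apply ℝ ℂ a).integrable_comp
    ((SchwartzMap.fderivCLM ℝ (ℝ × ℝ) ℂ υ).integrable (μ := volume)))
  simpa [SchwartzMap.fderivCLM_apply] using h

lemma Gint (h : ℝ) (a : ℝ × ℝ) : Integrable (Gfun υ h a) volume := by
  refine ((υ.integrable.comp_sub_right (h • a)).sub υ.integrable).add ?_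
  exact (intDa υ a).smul h

lemma key_ptwise' (h : ℝ) (a y : ℝ × ℝ) :
    ‖Gfun υ h a y‖ ≤ ‖h • a‖ * ∫ s in Set.Ioc (0:ℝ) 1,
      ‖fderiv ℝ (υ : ℝ × ℝ → ℂ) (y - s • (h • a)) - fderiv ℝ (υ : ℝ × ℝ → ℂ) y‖ := by
  have := key_ptwise υ (h • a) y
  simpa [Gfun, ContinuousLinearMap.map_smul] using this

lemma meas_B (w : ℝ × ℝ) : AEStronglyMeasurable (fun y : ℝ × ℝ =>
    ∫ s in Set.Ioc (0:ℝ) 1, ‖fderiv ℝ (υ : ℝ × ℝ → ℂ) (y - s • w)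
      - fderiv ℝ (υ : ℝ × ℝ → ℂ) y‖) volume := by
  have hc : Continuous (fun p : (ℝ × ℝ) × ℝ => ‖fderiv ℝ (υ : ℝ × ℝ → ℂ) (p.1 - p.2 • w)
      - fderiv ℝ (υ : ℝ × ℝ → ℂ) p.1‖) := by
    apply Continuous.norm
    exact ((contD υ).comp (continuous_fst.sub (continuous_snd.smul continuous_const))).sub
      ((contD υ).comp continuous_fst)
  exact (hc.stronglyMeasurable.integral_prod_right').aestronglyMeasurable

variable {C : ℝ} (hC0 : 0 ≤ C)
  (hC : ∀ y : ℝ × ℝ, ‖fderiv ℝ (υ : ℝ × ℝ → ℂ) y‖ ≤ C * ((1 + ‖y‖) ^ (3:ℕ))⁻¹)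

/-- The dominating function for the difference of the derivative and its translates. -/
noncomputable def bnd : ℝ × ℝ → ℝ :=
  fun y => 8 * C * ((1 + ‖y‖) ^ (3:ℕ))⁻¹ + ‖fderiv ℝ (υ : ℝ × ℝ → ℂ) y‖

lemma bnd_int : Integrable (bnd υ (C := C)) volume :=
  (integrable_inv_pow3.const_mul (8 * C)).add (intD υ)

include hC0 in
lemma bnd_nonneg (y : ℝ × ℝ) : 0 ≤ bnd υ (C := C) y := by
  have := hC0
  unfold bnd; positivity

include hC0 hC in
lemma hB {w : ℝ × ℝ} (hw : ‖w‖ ≤ 1) (y : ℝ × ℝ) :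
    (∫ s in Set.Ioc (0:ℝ) 1, ‖fderiv ℝ (υ : ℝ × ℝ → ℂ) (y - s • w)
      - fderiv ℝ (υ : ℝ × ℝ → ℂ) y‖) ≤ bnd υ (C := C) y := by
  set D := fun y : ℝ × ℝ => fderiv ℝ (υ : ℝ × ℝ → ℂ) y with hD
  have hptw : ∀ s ∈ Set.Ioc (0:ℝ) 1, ‖D (y - s • w) - D y‖ ≤ bnd υ (C := C) y := by
    intro s hs
    have hsw : ‖s • w‖ ≤ 1 := by
      rw [norm_smul, Real.norm_eq_abs, abs_of_pos hs.1]
      calc s * ‖w‖ ≤ 1 * 1 := mul_le_mul hs.2 hw (norm_nonneg w) zero_le_one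
      _ = 1 := by ring
    have h1 : ‖D (y - s • w)‖ ≤ C * (8 * ((1 + ‖y‖) ^ (3:ℕ))⁻¹) := by
      calc ‖D (y - s • w)‖ ≤ C * ((1 + ‖y - s • w‖) ^ (3:ℕ))⁻¹ := hC _
      _ ≤ C * (8 * ((1 + ‖y‖) ^ (3:ℕ))⁻¹) :=
          mul_le_mul_of_nonneg_left (shift_bound hsw) hC0
    calc ‖D (y - s • w) - D y‖ ≤ ‖D (y - s • w)‖ + ‖D y‖ := norm_sub_le _ _
    _ ≤ C * (8 * ((1 + ‖y‖) ^ (3:ℕ))⁻¹) + ‖D y‖ := by gcongr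
    _ = bnd υ (C := C) y := by rw [bnd]; ring_nf; rfl
  calc (∫ s in Set.Ioc (0:ℝ) 1, ‖D (y - s • w) - D y‖)
      ≤ ∫ _s in Set.Ioc (0:ℝ) 1, bnd υ (C := C) y := by
        apply setIntegral_mono_on
        · exact (((contD υ).comp (continuous_const.sub
            (continuous_id.smul continuous_const))).sub continuous_const).norm.integrableOn_Ioc
        · exact (integrableOn_const_iff (by simp)).mpr (Or.inr (by simp))
        · exact measurableSet_Ioc
        · exact hptw
  _ = bnd υ (C := C) y := by
        rw [setIntegral_const]
        simp [Real.volume_Ioc]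

end Phi

section Tendsto
variable (υ : SchwartzMap (ℝ × ℝ) ℂ)

lemma normD_le_bnd {C : ℝ} (hC0 : 0 ≤ C)
    (hC : ∀ y : ℝ × ℝ, ‖fderiv ℝ (υ : ℝ × ℝ → ℂ) y‖ ≤ C * ((1 + ‖y‖) ^ (3:ℕ))⁻¹)
    (z : ℝ × ℝ) : ‖fderiv ℝ (υ : ℝ × ℝ → ℂ) z‖ ≤ C := by
  calc ‖fderiv ℝ (υ : ℝ × ℝ → ℂ) z‖ ≤ C * ((1 + ‖z‖) ^ (3:ℕ))⁻¹ := hC z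
  _ ≤ C * 1 := by
      apply mul_le_mul_of_nonneg_left _ hC0
      rw [inv_le_one_iff₀]
      right
      apply one_le_pow₀
      linarith [norm_nonneg z]
  _ = C := mul_one C

lemma A_tendsto (a : ℝ × ℝ) :
    Tendsto (fun h : ℝ => ∫ y : ℝ × ℝ, (∫ s in Set.Ioc (0:ℝ) 1,
      ‖fderiv ℝ (υ : ℝ × ℝ → ℂ) (y - s • (h • a)) - fderiv ℝ (υ : ℝ × ℝ → ℂ) y‖))
      (𝓝 0) (𝓝 0) := by
  obtain ⟨C, hC0, hC⟩ := decayD υ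
  set D := fun y : ℝ × ℝ => fderiv ℝ (υ : ℝ × ℝ → ℂ) y with hD
  have hpos : (0:ℝ) < (1 + ‖a‖)⁻¹ := by positivity
  have hev : ∀ᶠ h : ℝ in 𝓝 0, ‖h • a‖ ≤ 1 := by
    have hb := Metric.ball_mem_nhds (0:ℝ) hpos
    refine Filter.eventually_of_mem hb fun h hh => ?_
    rw [mem_ball_zero_iff, Real.norm_eq_abs] at hh
    rw [norm_smul, Real.norm_eq_abs]
    calc |h| * ‖a‖ ≤ (1 + ‖a‖)⁻¹ * (1 + ‖a‖) :=
      mul_le_mul hh.le (by linarith [norm_nonneg a]) (norm_nonneg a) hpos.le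
    _ = 1 := inv_mul_cancel₀ (by positivity)
  have main := tendsto_integral_filter_of_dominated_convergence (μ := (volume : Measure (ℝ × ℝ)))
    (l := 𝓝 (0:ℝ))
    (F := fun h y => ∫ s in Set.Ioc (0:ℝ) 1, ‖D (y - s • (h • a)) - D y‖)
    (f := fun _ => (0:ℝ)) (bound := bnd υ (C := C))
    (Eventually.of_forall fun h => meas_B υ (h • a))
    (by
      refine hev.mono fun h hh => Eventually.of_forall fun y => ?_
      have h0 : 0 ≤ ∫ s in Set.Ioc (0:ℝ) 1, ‖D (y - s • (h • a)) - D y‖ :=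
        integral_nonneg fun s => norm_nonneg _
      rw [Real.norm_of_nonneg h0]
      exact hB υ hC0 hC hh y)
    (bnd_int υ)
    (by
      refine Eventually.of_forall fun y => ?_
      have inner := tendsto_integral_filter_of_dominated_convergence
        (μ := volume.restrict (Set.Ioc (0:ℝ) 1)) (l := 𝓝 (0:ℝ))
        (F := fun h s => ‖D (y - s • (h • a)) - D y‖)
        (f := fun _ => (0:ℝ)) (bound := fun _ => C + ‖D y‖)
        (Eventually.of_forall fun h =>
          ((((contD υ).comp (continuous_const.sub
            (continuous_id.smul continuous_const))).sub
              continuous_const).norm.aestronglyMeasurable))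
        (Eventually.of_forall fun h => Eventually.of_forall fun s => by
          rw [Real.norm_of_nonneg (norm_nonneg _)]
          calc ‖D (y - s • (h • a)) - D y‖ ≤ ‖D (y - s • (h • a))‖ + ‖D y‖ := norm_sub_le _ _
          _ ≤ C + ‖D y‖ := by
              have := normD_le_bnd υ hC0 hC (y - s • (h • a))
              gcongr)
        ((integrableOn_const_iff (by simp)).mpr (Or.inr measure_Ioc_lt_top))
        (Eventually.of_forall fun s => by
          have hcont : Continuous fun h : ℝ => ‖D (y - s • (h • a)) - D y‖ :=
            (((contD υ).comp (continuous_const.sub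
              ((continuous_id.smul (continuous_const : Continuous fun _ : ℝ => a)).const_smul
                s))).sub continuous_const).norm
          have := hcont.tendsto 0
          simpa using this)
      simpa using inner)
  simpa using main

lemma phi_nonneg (h : ℝ) (a : ℝ × ℝ) : 0 ≤ phi υ h a :=
  integral_nonneg fun y => norm_nonneg _

lemma phi_zero (a : ℝ × ℝ) : phi υ 0 a = 0 := by
  simp [phi, Gfun]

lemma phi_le {C : ℝ} (hC0 : 0 ≤ C)
    (hC : ∀ y : ℝ × ℝ, ‖fderiv ℝ (υ : ℝ × ℝ → ℂ) y‖ ≤ C * ((1 + ‖y‖) ^ (3:ℕ))⁻¹)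
    {h : ℝ} {a : ℝ × ℝ} (hha : ‖h • a‖ ≤ 1) :
    phi υ h a ≤ ‖h • a‖ * ∫ y, bnd υ (C := C) y := by
  have hest : ∀ y : ℝ × ℝ, ‖Gfun υ h a y‖ ≤ ‖h • a‖ * bnd υ (C := C) y := fun y =>
    le_trans (key_ptwise' υ h a y)
      (mul_le_mul_of_nonneg_left (hB υ hC0 hC hha y) (norm_nonneg _))
  calc phi υ h a ≤ ∫ y, ‖h • a‖ * bnd υ (C := C) y := by
        apply integral_mono_of_nonneg (Eventually.of_forall fun y => norm_nonneg _)
          ((bnd_int υ).const_mul _) (Eventually.of_forall hest)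
  _ = ‖h • a‖ * ∫ y, bnd υ (C := C) y := MeasureTheory.integral_const_mul _ _

lemma phi_tendsto (a : ℝ × ℝ) :
    Tendsto (fun h : ℝ => |h|⁻¹ * phi υ h a) (𝓝 0) (𝓝 0) := by
  obtain ⟨C, hC0, hC⟩ := decayD υ
  set A := fun h : ℝ => ∫ y : ℝ × ℝ, (∫ s in Set.Ioc (0:ℝ) 1,
    ‖fderiv ℝ (υ : ℝ × ℝ → ℂ) (y - s • (h • a)) - fderiv ℝ (υ : ℝ × ℝ → ℂ) y‖) with hA
  have hAnn : ∀ h, 0 ≤ A h := fun h =>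
    integral_nonneg fun y => integral_nonneg fun s => norm_nonneg _
  have hpos : (0:ℝ) < (1 + ‖a‖)⁻¹ := by positivity
  have hev : ∀ᶠ h : ℝ in 𝓝 0, ‖h • a‖ ≤ 1 := by
    have hb := Metric.ball_mem_nhds (0:ℝ) hpos
    refine Filter.eventually_of_mem hb fun h hh => ?_
    rw [mem_ball_zero_iff, Real.norm_eq_abs] at hh
    rw [norm_smul, Real.norm_eq_abs]
    calc |h| * ‖a‖ ≤ (1 + ‖a‖)⁻¹ * (1 + ‖a‖) :=
      mul_le_mul hh.le (by linarith [norm_nonneg a]) (norm_nonneg a) hpos.le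
    _ = 1 := inv_mul_cancel₀ (by positivity)
  apply squeeze_zero' (g := fun h => ‖a‖ * A h)
  · exact Eventually.of_forall fun h =>
      mul_nonneg (inv_nonneg.mpr (abs_nonneg h)) (phi_nonneg υ h a)
  · refine hev.mono fun h hh => ?_
    rcases eq_or_ne h 0 with rfl | hne
    · simp [phi_zero]
      positivity
    · have hphi : phi υ h a ≤ ‖h • a‖ * A h := by
        have hintB : Integrable (fun y : ℝ × ℝ => ∫ s in Set.Ioc (0:ℝ) 1,
            ‖fderiv ℝ (υ : ℝ × ℝ → ℂ) (y - s • (h • a)) - fderiv ℝ (υ : ℝ × ℝ → ℂ) y‖)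
            volume := by
          apply Integrable.mono' (bnd_int υ (C := C)) (meas_B υ (h • a))
          refine Eventually.of_forall fun y => ?_
          rw [Real.norm_of_nonneg (integral_nonneg fun s => norm_nonneg _)]
          exact hB υ hC0 hC hh y
        calc phi υ h a ≤ ∫ y, ‖h • a‖ * (∫ s in Set.Ioc (0:ℝ) 1,
              ‖fderiv ℝ (υ : ℝ × ℝ → ℂ) (y - s • (h • a))
                - fderiv ℝ (υ : ℝ × ℝ → ℂ) y‖) := by
              apply integral_mono_of_nonneg (Eventually.of_forall fun y => norm_nonneg _)
                (hintB.const_mul _) (Eventually.of_forall (key_ptwise' υ h a))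
        _ = ‖h • a‖ * A h := MeasureTheory.integral_const_mul _ _
      calc |h|⁻¹ * phi υ h a ≤ |h|⁻¹ * (‖h • a‖ * A h) :=
            mul_le_mul_of_nonneg_left hphi (inv_nonneg.mpr (abs_nonneg h))
      _ = ‖a‖ * A h := by
            rw [norm_smul, Real.norm_eq_abs]
            field_simp
  · have := (A_tendsto υ a).const_mul ‖a‖
    simpa using this

/-- `Ffun υ μ t x = ∫ υ (x - t • a) ∂μ(a)`. -/
noncomputable def Ffun (υ : SchwartzMap (ℝ × ℝ) ℂ) (μ : Measure (ℝ × ℝ)) (t : ℝ) :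
    ℝ × ℝ → ℂ :=
  fun x => ∫ a, υ (x - t • a) ∂μ

/-- `Hfun υ μ t x = - ∫ (fderiv ℝ υ (x - t • a)) a ∂μ(a)`. -/
noncomputable def Hfun (υ : SchwartzMap (ℝ × ℝ) ℂ) (μ : Measure (ℝ × ℝ)) (t : ℝ) :
    ℝ × ℝ → ℂ :=
  fun x => - ∫ a, fderiv ℝ (υ : ℝ × ℝ → ℂ) (x - t • a) a ∂μ

section Main
variable (υ : SchwartzMap (ℝ × ℝ) ℂ) (μ : Measure (ℝ × ℝ)) [IsFiniteMeasure μ]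

lemma hF_int (t : ℝ) : Integrable (Ffun υ μ t) volume := by
  have hc : Continuous fun p : (ℝ × ℝ) × (ℝ × ℝ) => υ (p.1 - t • p.2) :=
    υ.continuous.comp (continuous_fst.sub (continuous_snd.const_smul t))
  refine ⟨(hc.stronglyMeasurable.integral_prod_right').aestronglyMeasurable, ?_⟩
  rw [hasFiniteIntegral_def]
  have key : (∫⁻ x, (‖Ffun υ μ t x‖₊ : ℝ≥0∞) ∂volume)
      ≤ (∫⁻ y, (‖υ y‖₊ : ℝ≥0∞) ∂volume) * μ Set.univ := by
    calc ∫⁻ x, (‖Ffun υ μ t x‖₊ : ℝ≥0∞) ∂volume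
        ≤ ∫⁻ x, ∫⁻ a, (‖υ (x - t • a)‖₊ : ℝ≥0∞) ∂μ ∂volume :=
          lintegral_mono fun x => enorm_integral_le_lintegral_enorm _
    _ = ∫⁻ a, ∫⁻ x, (‖υ (x - t • a)‖₊ : ℝ≥0∞) ∂volume ∂μ :=
          lintegral_lintegral_swap (hc.measurable.enorm.aemeasurable)
    _ = ∫⁻ a, (∫⁻ y, (‖υ y‖₊ : ℝ≥0∞) ∂volume) ∂μ := by
          refine lintegral_congr fun a => ?_
          exact lintegral_sub_right_eq_self (fun y => (‖υ y‖₊ : ℝ≥0∞)) (t • a)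
    _ = (∫⁻ y, (‖υ y‖₊ : ℝ≥0∞) ∂volume) * μ Set.univ := lintegral_const _
  exact lt_of_le_of_lt key
    (ENNReal.mul_lt_top (υ.integrable (μ := volume)).2 (measure_lt_top μ _))

lemma hH_int {R : ℝ} (haeR : ∀ᵐ a ∂μ, ‖a‖ ≤ R) (t : ℝ) :
    Integrable (Hfun υ μ t) volume := by
  have hc : Continuous fun p : (ℝ × ℝ) × (ℝ × ℝ) =>
      (fderiv ℝ (υ : ℝ × ℝ → ℂ) (p.1 - t • p.2)) p.2 :=
    (((contD υ).comp (continuous_fst.sub (continuous_snd.const_smul t))).clm_apply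
      continuous_snd)
  have hint : Integrable (fun x : ℝ × ℝ =>
      ∫ a, (fderiv ℝ (υ : ℝ × ℝ → ℂ) (x - t • a)) a ∂μ) volume := by
    refine ⟨(hc.stronglyMeasurable.integral_prod_right').aestronglyMeasurable, ?_⟩
    rw [hasFiniteIntegral_def]
    have hDfin : (∫⁻ y, (‖fderiv ℝ (υ : ℝ × ℝ → ℂ) y‖₊ : ℝ≥0∞) ∂volume) < ⊤ := by
      have h2 := ((SchwartzMap.fderivCLM ℝ (ℝ × ℝ) ℂ υ).integrable (μ := volume)).2
      rw [hasFiniteIntegral_def] at h2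
      exact (by simpa [SchwartzMap.fderivCLM_apply] using h2 :
        (∫⁻ y, ‖fderiv ℝ (υ : ℝ × ℝ → ℂ) y‖ₑ ∂volume) < ⊤)
    have key : (∫⁻ x, (‖∫ a, (fderiv ℝ (υ : ℝ × ℝ → ℂ) (x - t • a)) a ∂μ‖₊ : ℝ≥0∞) ∂volume)
        ≤ (∫⁻ y, (‖fderiv ℝ (υ : ℝ × ℝ → ℂ) y‖₊ : ℝ≥0∞) ∂volume)
            * ENNReal.ofReal R * μ Set.univ := by
      calc (∫⁻ x, (‖∫ a, (fderiv ℝ (υ : ℝ × ℝ → ℂ) (x - t • a)) a ∂μ‖₊ : ℝ≥0∞) ∂volume)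
          ≤ ∫⁻ x, ∫⁻ a, (‖(fderiv ℝ (υ : ℝ × ℝ → ℂ) (x - t • a)) a‖₊ : ℝ≥0∞) ∂μ ∂volume :=
            lintegral_mono fun x => enorm_integral_le_lintegral_enorm _
      _ = ∫⁻ a, ∫⁻ x, (‖(fderiv ℝ (υ : ℝ × ℝ → ℂ) (x - t • a)) a‖₊ : ℝ≥0∞) ∂volume ∂μ :=
            lintegral_lintegral_swap (hc.measurable.enorm.aemeasurable)
      _ ≤ ∫⁻ a, (∫⁻ y, (‖fderiv ℝ (υ : ℝ × ℝ → ℂ) y‖₊ : ℝ≥0∞) ∂volume)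
            * ENNReal.ofReal R ∂μ := by
            refine lintegral_mono_ae (haeR.mono fun a ha => ?_)
            calc ∫⁻ x, (‖(fderiv ℝ (υ : ℝ × ℝ → ℂ) (x - t • a)) a‖₊ : ℝ≥0∞) ∂volume
                ≤ ∫⁻ x, (‖fderiv ℝ (υ : ℝ × ℝ → ℂ) (x - t • a)‖₊ : ℝ≥0∞)
                    * (‖a‖₊ : ℝ≥0∞) ∂volume := by
                  refine lintegral_mono fun x => ?_
                  rw [← ENNReal.coe_mul]
                  exact ENNReal.coe_le_coe.mpr (ContinuousLinearMap.le_opNNNorm _ a)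
            _ = (∫⁻ x, (‖fderiv ℝ (υ : ℝ × ℝ → ℂ) (x - t • a)‖₊ : ℝ≥0∞) ∂volume)
                  * (‖a‖₊ : ℝ≥0∞) :=
                lintegral_mul_const _ (((contD υ).comp
                  (continuous_id.sub (continuous_const : Continuous fun _ : ℝ × ℝ =>
                    t • a))).measurable.enorm)
            _ ≤ (∫⁻ y, (‖fderiv ℝ (υ : ℝ × ℝ → ℂ) y‖₊ : ℝ≥0∞) ∂volume)
                  * ENNReal.ofReal R := by
                rw [lintegral_sub_right_eq_self
                  (fun y => (‖fderiv ℝ (υ : ℝ × ℝ → ℂ) y‖₊ : ℝ≥0∞)) (t • a)]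
                refine mul_le_mul_right ?_ _
                rw [← ENNReal.ofReal_coe_nnreal, coe_nnnorm]
                exact ENNReal.ofReal_le_ofReal ha
      _ = (∫⁻ y, (‖fderiv ℝ (υ : ℝ × ℝ → ℂ) y‖₊ : ℝ≥0∞) ∂volume)
            * ENNReal.ofReal R * μ Set.univ := lintegral_const _
    exact lt_of_le_of_lt key (ENNReal.mul_lt_top
      (ENNReal.mul_lt_top hDfin ENNReal.ofReal_lt_top) (measure_lt_top μ _))
  exact hint.neg

end Main

section Est
variable (υ : SchwartzMap (ℝ × ℝ) ℂ) (μ : Measure (ℝ × ℝ)) [IsFiniteMeasure μ]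

lemma υ_bdd : ∃ C : ℝ, 0 ≤ C ∧ ∀ z : ℝ × ℝ, ‖υ z‖ ≤ C := by
  obtain ⟨C, hC0, hC⟩ := decay3 υ
  refine ⟨C, hC0, fun z => ?_⟩
  calc ‖υ z‖ ≤ C * ((1 + ‖z‖) ^ (3:ℕ))⁻¹ := hC z
  _ ≤ C * 1 := by
      apply mul_le_mul_of_nonneg_left _ hC0
      rw [inv_le_one_iff₀]
      right
      apply one_le_pow₀
      linarith [norm_nonneg z]
  _ = C := mul_one C

lemma D_bdd : ∃ C : ℝ, 0 ≤ C ∧ ∀ z : ℝ × ℝ, ‖fderiv ℝ (υ : ℝ × ℝ → ℂ) z‖ ≤ C := by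
  obtain ⟨C, hC0, hC⟩ := decayD υ
  exact ⟨C, hC0, normD_le_bnd υ hC0 hC⟩

lemma Gcont1 (h : ℝ) : Continuous fun p : (ℝ × ℝ) × (ℝ × ℝ) => Gfun υ h p.1 p.2 := by
  unfold Gfun
  refine Continuous.add (Continuous.sub ?_ ?_) ?_
  · exact υ.continuous.comp (continuous_snd.sub (continuous_fst.const_smul h))
  · exact υ.continuous.comp continuous_snd
  · exact (((contD υ).comp continuous_snd).clm_apply continuous_fst).const_smul h

lemma Dsplit {R : ℝ} (haeR : ∀ᵐ a ∂μ, ‖a‖ ≤ R) (t t₀ : ℝ) (x : ℝ × ℝ) :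
    Ffun υ μ t x - Ffun υ μ t₀ x - (t - t₀) • Hfun υ μ t₀ x
      = ∫ a, Gfun υ (t - t₀) a (x - t₀ • a) ∂μ := by
  obtain ⟨Cυ, hCυ0, hCυ⟩ := υ_bdd υ
  obtain ⟨CD, hCD0, hCD⟩ := D_bdd υ
  have i1 : ∀ s : ℝ, Integrable (fun a : ℝ × ℝ => υ (x - s • a)) μ := fun s =>
    (integrable_const Cυ).mono'
      ((υ.continuous.comp (continuous_const.sub (continuous_id.const_smul s))
        : Continuous fun a : ℝ × ℝ => υ (x - s • a)).aestronglyMeasurable)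
      (Eventually.of_forall fun a => hCυ _)
  have i3 : Integrable (fun a : ℝ × ℝ => (fderiv ℝ (υ : ℝ × ℝ → ℂ) (x - t₀ • a)) a) μ := by
    refine (integrable_const (CD * R)).mono'
      ((((contD υ).comp (continuous_const.sub (continuous_id.const_smul t₀))).clm_apply
        continuous_id).aestronglyMeasurable) (haeR.mono fun a ha => ?_)
    calc ‖(fderiv ℝ (υ : ℝ × ℝ → ℂ) (x - t₀ • a)) a‖
        ≤ ‖fderiv ℝ (υ : ℝ × ℝ → ℂ) (x - t₀ • a)‖ * ‖a‖ := ContinuousLinearMap.le_opNorm _ _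
    _ ≤ CD * R := mul_le_mul (hCD _) ha (norm_nonneg a) hCD0
  show (∫ a, υ (x - t • a) ∂μ) - (∫ a, υ (x - t₀ • a) ∂μ)
      - (t - t₀) • (-∫ a, (fderiv ℝ (υ : ℝ × ℝ → ℂ) (x - t₀ • a)) a ∂μ) = _
  have hsub : Integrable (fun a : ℝ × ℝ => υ (x - t • a) - υ (x - t₀ • a)) μ :=
    (i1 t).sub (i1 t₀)
  have hsm : Integrable (fun a : ℝ × ℝ =>
      (t - t₀) • ((fderiv ℝ (υ : ℝ × ℝ → ℂ) (x - t₀ • a)) a)) μ := i3.smul (t - t₀)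
  rw [smul_neg, sub_neg_eq_add, ← integral_smul, ← integral_sub (i1 t) (i1 t₀),
    ← integral_add hsub hsm]
  refine integral_congr_ae (Eventually.of_forall fun a => ?_)
  unfold Gfun
  have harg : x - t₀ • a - (t - t₀) • a = x - t • a := by
    rw [sub_smul]; abel
  simp only [harg]

lemma norm_est {R : ℝ} (hR0 : 0 ≤ R) (haeR : ∀ᵐ a ∂μ, ‖a‖ ≤ R) (t t₀ : ℝ) :
    (∫ x, ‖Ffun υ μ t x - Ffun υ μ t₀ x - (t - t₀) • Hfun υ μ t₀ x‖)
      ≤ ∫ a, phi υ (t - t₀) a ∂μ := by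
  set h : ℝ := t - t₀ with hh
  set D := fun y : ℝ × ℝ => fderiv ℝ (υ : ℝ × ℝ → ℂ) y with hD
  -- measurability of `phi`
  have hphim : AEStronglyMeasurable (fun a => phi υ h a) μ :=
    (((Gcont1 υ h).norm).stronglyMeasurable.integral_prod_right').aestronglyMeasurable
  -- uniform bound for `phi`
  set cst : ℝ := (∫ y : ℝ × ℝ, ‖υ y‖) + (∫ y : ℝ × ℝ, ‖υ y‖)
    + (|h| * R) * ∫ y : ℝ × ℝ, ‖D y‖ with hcst
  have hphile : ∀ᵐ a ∂μ, phi υ h a ≤ cst := by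
    refine haeR.mono fun a ha => ?_
    have hg1 : Integrable (fun y : ℝ × ℝ => ‖υ (y - h • a)‖) volume :=
      (υ.integrable (μ := volume)).norm.comp_sub_right (h • a)
    have hg2 : Integrable (fun y : ℝ × ℝ => ‖υ y‖) volume := (υ.integrable (μ := volume)).norm
    have hg3 : Integrable (fun y : ℝ × ℝ => (|h| * R) * ‖D y‖) volume :=
      (intD υ).const_mul _
    have hbound : ∀ y : ℝ × ℝ, ‖Gfun υ h a y‖
        ≤ ‖υ (y - h • a)‖ + ‖υ y‖ + (|h| * R) * ‖D y‖ := by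
      intro y
      have h3 : ‖h • ((D y) a)‖ ≤ (|h| * R) * ‖D y‖ := by
        rw [norm_smul, Real.norm_eq_abs]
        calc |h| * ‖(D y) a‖ ≤ |h| * (‖D y‖ * ‖a‖) :=
          mul_le_mul_of_nonneg_left (ContinuousLinearMap.le_opNorm _ _) (abs_nonneg h)
        _ ≤ |h| * (‖D y‖ * R) :=
          mul_le_mul_of_nonneg_left
            (mul_le_mul_of_nonneg_left ha (norm_nonneg _)) (abs_nonneg h)
        _ = (|h| * R) * ‖D y‖ := by ring
      calc ‖Gfun υ h a y‖ ≤ ‖υ (y - h • a) - υ y‖ + ‖h • ((D y) a)‖ := norm_add_le _ _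
      _ ≤ (‖υ (y - h • a)‖ + ‖υ y‖) + ‖h • ((D y) a)‖ := by
          gcongr
          exact norm_sub_le _ _
      _ ≤ ‖υ (y - h • a)‖ + ‖υ y‖ + (|h| * R) * ‖D y‖ := by linarith
    calc phi υ h a ≤ ∫ y : ℝ × ℝ, (‖υ (y - h • a)‖ + ‖υ y‖ + (|h| * R) * ‖D y‖) := by
          refine integral_mono_of_nonneg (Eventually.of_forall fun y => norm_nonneg _)
            ((hg1.add hg2).add hg3) (Eventually.of_forall hbound)
    _ = (∫ y : ℝ × ℝ, ‖υ (y - h • a)‖) + (∫ y : ℝ × ℝ, ‖υ y‖)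
          + (|h| * R) * ∫ y : ℝ × ℝ, ‖D y‖ := by
          have hg12 : Integrable (fun y : ℝ × ℝ => ‖υ (y - h • a)‖ + ‖υ y‖) volume :=
            hg1.add hg2
          rw [integral_add hg12 hg3, integral_add hg1 hg2,
            MeasureTheory.integral_const_mul]
    _ = cst := by
          rw [hcst, integral_sub_right_eq_self (fun y : ℝ × ℝ => ‖υ y‖) (h • a)]
  -- the integrable difference
  have hDint : Integrable (fun x => Ffun υ μ t x - Ffun υ μ t₀ x
      - h • Hfun υ μ t₀ x) volume :=
    (((hF_int υ μ t).sub (hF_int υ μ t₀)).sub ((hH_int υ μ haeR t₀).smul h))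
  -- lintegral estimate
  have hcont2 : Continuous fun p : (ℝ × ℝ) × (ℝ × ℝ) => Gfun υ h p.2 (p.1 - t₀ • p.2) :=
    (Gcont1 υ h).comp (continuous_snd.prodMk
      (continuous_fst.sub (continuous_snd.const_smul t₀)))
  have hle : (∫⁻ x, (‖Ffun υ μ t x - Ffun υ μ t₀ x - h • Hfun υ μ t₀ x‖₊ : ℝ≥0∞) ∂volume)
      ≤ ∫⁻ a, ENNReal.ofReal (phi υ h a) ∂μ := by
    calc (∫⁻ x, (‖Ffun υ μ t x - Ffun υ μ t₀ x - h • Hfun υ μ t₀ x‖₊ : ℝ≥0∞) ∂volume)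
        = ∫⁻ x, (‖∫ a, Gfun υ h a (x - t₀ • a) ∂μ‖₊ : ℝ≥0∞) ∂volume := by
          refine lintegral_congr fun x => ?_
          rw [Dsplit υ μ haeR t t₀ x]
    _ ≤ ∫⁻ x, ∫⁻ a, (‖Gfun υ h a (x - t₀ • a)‖₊ : ℝ≥0∞) ∂μ ∂volume :=
          lintegral_mono fun x => enorm_integral_le_lintegral_enorm _
    _ = ∫⁻ a, ∫⁻ x, (‖Gfun υ h a (x - t₀ • a)‖₊ : ℝ≥0∞) ∂volume ∂μ :=
          lintegral_lintegral_swap (hcont2.measurable.enorm.aemeasurable)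
    _ = ∫⁻ a, ∫⁻ y, (‖Gfun υ h a y‖₊ : ℝ≥0∞) ∂volume ∂μ := by
          refine lintegral_congr fun a => ?_
          exact lintegral_sub_right_eq_self (fun y => (‖Gfun υ h a y‖₊ : ℝ≥0∞)) (t₀ • a)
    _ = ∫⁻ a, ENNReal.ofReal (phi υ h a) ∂μ := by
          refine lintegral_congr fun a => ?_
          exact (ofReal_integral_norm_eq_lintegral_enorm (Gint υ h a)).symm
  have hfin : (∫⁻ a, ENNReal.ofReal (phi υ h a) ∂μ) ≠ ⊤ := by
    refine ne_of_lt (lt_of_le_of_lt (lintegral_mono_ae (hphile.mono fun a ha =>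
      ENNReal.ofReal_le_ofReal ha)) ?_)
    rw [lintegral_const]
    exact ENNReal.mul_lt_top ENNReal.ofReal_lt_top (measure_lt_top μ _)
  calc (∫ x, ‖Ffun υ μ t x - Ffun υ μ t₀ x - h • Hfun υ μ t₀ x‖)
      = (∫⁻ x, (‖Ffun υ μ t x - Ffun υ μ t₀ x - h • Hfun υ μ t₀ x‖₊ : ℝ≥0∞) ∂volume).toReal :=
        integral_norm_eq_lintegral_enorm hDint.1
  _ ≤ (∫⁻ a, ENNReal.ofReal (phi υ h a) ∂μ).toReal := ENNReal.toReal_mono hfin hle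
  _ = ∫ a, phi υ h a ∂μ := by
        rw [integral_eq_lintegral_of_nonneg_ae
          (Eventually.of_forall fun a => phi_nonneg υ h a) hphim]

end Est

/-- For a Schwartz function `υ` on `ℝ × ℝ` and a compactly supported finite measure `μ`,
the functions `Ffun υ μ t` and `Hfun υ μ t` are integrable, and the curve
`t ↦ [Ffun υ μ t]` in `L¹` is strongly differentiable with derivative `[Hfun υ μ t₀]`. -/

theorem stmt_9 (υ : SchwartzMap (ℝ × ℝ) ℂ) (μ : Measure (ℝ × ℝ)) [IsFiniteMeasure μ]
    (hμ : ∃ K : Set (ℝ × ℝ), IsCompact K ∧ μ Kᶜ = 0) :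
    ∃ (hF : ∀ t : ℝ, Integrable (Ffun υ μ t) volume)
      (hH : ∀ t : ℝ, Integrable (Hfun υ μ t) volume),
      ∀ t₀ : ℝ, HasDerivAt (fun t : ℝ => Integrable.toL1 (Ffun υ μ t) (hF t))
        (Integrable.toL1 (Hfun υ μ t₀) (hH t₀)) t₀ := by
  obtain ⟨K, hK, hKc⟩ := hμ
  obtain ⟨R₀, hR₀⟩ := hK.isBounded.exists_norm_le
  set R : ℝ := max R₀ 0 with hRdef
  have hR0 : 0 ≤ R := le_max_right _ _
  have haeK : ∀ᵐ a ∂μ, a ∈ K := by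
    rw [MeasureTheory.ae_iff]
    exact hKc
  have haeR : ∀ᵐ a ∂μ, ‖a‖ ≤ R := haeK.mono fun a ha =>
    le_trans (hR₀ a ha) (le_max_left _ _)
  refine ⟨hF_int υ μ, fun t => hH_int υ μ haeR t, fun t₀ => ?_⟩
  rw [hasDerivAt_iff_tendsto]
  obtain ⟨C, hC0, hC⟩ := decayD υ
  set Cb : ℝ := ∫ y, bnd υ (C := C) y with hCb
  have hCb0 : 0 ≤ Cb := integral_nonneg (bnd_nonneg υ hC0)
  have hGm : ∀ t : ℝ, AEStronglyMeasurable (fun a => phi υ (t - t₀) a) μ := fun t =>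
    (((Gcont1 υ (t - t₀)).norm).stronglyMeasurable.integral_prod_right').aestronglyMeasurable
  apply squeeze_zero (g := fun t => ∫ a, |t - t₀|⁻¹ * phi υ (t - t₀) a ∂μ)
  · intro t
    exact mul_nonneg (inv_nonneg.mpr (norm_nonneg _)) (norm_nonneg _)
  · intro t
    have hnorm : ‖Integrable.toL1 (Ffun υ μ t) (hF_int υ μ t)
          - Integrable.toL1 (Ffun υ μ t₀) (hF_int υ μ t₀)
          - (t - t₀) • Integrable.toL1 (Hfun υ μ t₀) (hH_int υ μ haeR t₀)‖
        = ∫ x, ‖Ffun υ μ t x - Ffun υ μ t₀ x - (t - t₀) • Hfun υ μ t₀ x‖ := by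
      rw [← Integrable.toL1_smul', ← Integrable.toL1_sub, ← Integrable.toL1_sub,
        L1.norm_of_fun_eq_integral_norm]
      simp only [Pi.sub_apply, Pi.smul_apply]
    rw [hnorm, Real.norm_eq_abs]
    calc |t - t₀|⁻¹ * ∫ x, ‖Ffun υ μ t x - Ffun υ μ t₀ x - (t - t₀) • Hfun υ μ t₀ x‖
        ≤ |t - t₀|⁻¹ * ∫ a, phi υ (t - t₀) a ∂μ :=
          mul_le_mul_of_nonneg_left (norm_est υ μ hR0 haeR t t₀)
            (inv_nonneg.mpr (abs_nonneg _))
    _ = ∫ a, |t - t₀|⁻¹ * phi υ (t - t₀) a ∂μ := (MeasureTheory.integral_const_mul _ _).symm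
  · have hev : ∀ᶠ t : ℝ in 𝓝 t₀, |t - t₀| ≤ (1 + R)⁻¹ := by
      have hpos : (0:ℝ) < (1 + R)⁻¹ := by positivity
      refine Filter.eventually_of_mem (Metric.ball_mem_nhds t₀ hpos) fun t ht => ?_
      rw [Metric.mem_ball, Real.dist_eq] at ht
      exact ht.le
    have hbound : ∀ᶠ t : ℝ in 𝓝 t₀, ∀ᵐ a ∂μ,
        ‖|t - t₀|⁻¹ * phi υ (t - t₀) a‖ ≤ R * Cb := by
      refine hev.mono fun t ht => haeR.mono fun a ha => ?_
      have hnn : 0 ≤ |t - t₀|⁻¹ * phi υ (t - t₀) a :=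
        mul_nonneg (inv_nonneg.mpr (abs_nonneg _)) (phi_nonneg υ _ a)
      rw [Real.norm_of_nonneg hnn]
      rcases eq_or_ne (t - t₀) 0 with h0 | hne
      · rw [h0, phi_zero]
        simpa using mul_nonneg hR0 hCb0
      · have h1 : ‖(t - t₀) • a‖ ≤ 1 := by
          rw [norm_smul, Real.norm_eq_abs]
          calc |t - t₀| * ‖a‖ ≤ (1 + R)⁻¹ * (1 + R) :=
            mul_le_mul ht (by linarith) (norm_nonneg a) (by positivity)
          _ = 1 := inv_mul_cancel₀ (by positivity)
        have h2 := phi_le υ hC0 hC h1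
        have habs : |t - t₀| ≠ 0 := fun hcon => hne (abs_eq_zero.mp hcon)
        calc |t - t₀|⁻¹ * phi υ (t - t₀) a
            ≤ |t - t₀|⁻¹ * (‖(t - t₀) • a‖ * Cb) :=
              mul_le_mul_of_nonneg_left h2 (inv_nonneg.mpr (abs_nonneg _))
        _ = ‖a‖ * Cb := by
              rw [norm_smul, Real.norm_eq_abs]
              field_simp
        _ ≤ R * Cb := mul_le_mul_of_nonneg_right ha hCb0
    have hlim : ∀ᵐ a ∂μ, Tendsto (fun t : ℝ => |t - t₀|⁻¹ * phi υ (t - t₀) a)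
        (𝓝 t₀) (𝓝 0) := by
      refine Eventually.of_forall fun a => ?_
      have hsub : Tendsto (fun t : ℝ => t - t₀) (𝓝 t₀) (𝓝 0) :=
        tendsto_sub_nhds_zero_iff.mpr tendsto_id
      exact (phi_tendsto υ a).comp hsub
    have hDCT := tendsto_integral_filter_of_dominated_convergence (μ := μ) (l := 𝓝 t₀)
      (F := fun t a => |t - t₀|⁻¹ * phi υ (t - t₀) a) (f := fun _ => (0:ℝ))
      (bound := fun _ => R * Cb)
      (Eventually.of_forall fun t => (hGm t).const_mul _)
      hbound (integrable_const _) hlim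
    simpa using hDCT
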